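/- Fix 1 < p ≤ ∞, C > 0, and an operator A : X → Y. Then A fails to satisfy C-ℓ_p upper tree estimates if and only if there exists a normally weakly null collection (x_t)_{t∈D^{<ℕ}} ⊆ B_X such that for every infinite branch t = (v_i)_{i=1}^∞ ∈ D^ℕ there exist n ∈ ℕ and (a_i)_{i=1}^n in the unit ball of ℓ_p^n with ‖A∑_{i=1}^n a_i x_{(v_1,…,v_i)}‖ > C. -/
import Mathlib


open Filter
open scoped Classical ENNReal NNReal

section Combinatorics

variable {D : Type*} [Preorder D]

/-- A subset of a directed set is cofinal if every element has an upper bound in it. -/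
def Cofinal (S : Set D) : Prop := ∀ u : D, ∃ v ∈ S, u ≤ v

/-- A subset is eventual if its complement is not cofinal. -/
def Eventual (S : Set D) : Prop := ¬ Cofinal Sᶜ

/-- Inevitable subsets of the tree of nonempty finite sequences from `D`. -/
def Inevitable (B : Set (List D)) : Prop :=
  Eventual {u : D | [u] ∈ B} ∧
    ∀ t ∈ B, t ≠ [] → Eventual {u : D | t ++ [u] ∈ B}

/-- A set of finite sequences is big if it contains an inevitable subset. -/
def Big (B : Set (List D)) : Prop := ∃ B' : Set (List D), B' ⊆ B ∧ Inevitable B'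

end Combinatorics

/-- The canonical weak neighborhood basis at `0` in `X`: basic weak neighborhoods are
indexed by a finite set of functionals and a positive `ε`. -/
def WNbhd (X : Type*) [NormedAddCommGroup X] [NormedSpace ℝ X] : Type _ :=
  Finset (X →L[ℝ] ℝ) × {ε : ℝ // 0 < ε}

variable {X Y : Type*} [NormedAddCommGroup X] [NormedSpace ℝ X]
  [NormedAddCommGroup Y] [NormedSpace ℝ Y]

/-- The basic weak neighborhood of `0` determined by `u ∈ WNbhd X`. -/
def wset (u : WNbhd X) : Set X := {x | ∀ f ∈ u.1, |f x| < u.2.1}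

/-- `WNbhd X` is directed by reverse inclusion of the associated neighborhoods. -/
instance : Preorder (WNbhd X) :=
  Preorder.lift fun u : WNbhd X => OrderDual.toDual (wset u)

/-- A collection `(x_t)` indexed by the nonempty finite sequences from the weak
neighborhood basis is normally weakly null (and contained in `B_X`) if
`x_t ∈ B_X ∩ u_n` whenever `t = (u_1, …, u_n)`. -/
def NormallyWeaklyNull (x : List (WNbhd X) → X) : Prop :=
  ∀ (t : List (WNbhd X)) (u : WNbhd X), ‖x (t ++ [u])‖ ≤ 1 ∧ x (t ++ [u]) ∈ wset u

/-- Membership of `(a_1, …, a_n)` in the unit ball of `ℓ_p^n` (`ℓ_∞^n` when `p = ∞`). -/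
def pBall (p : ℝ≥0∞) (n : ℕ) (a : ℕ → ℝ) : Prop :=
  if p = ⊤ then ∀ i < n, |a i| ≤ 1
  else ∑ i ∈ Finset.range n, |a i| ^ p.toReal ≤ 1

/-- `A` satisfies `C`-`ℓ_p` upper tree estimates (`C`-`c₀` when `p = ∞`) if for every
normally weakly null collection `(x_t) ⊆ B_X`, the set of `t` such that
`‖A ∑_{i ≤ |t|} a_i x_{t|_i}‖ ≤ C ‖(a_i)‖_{ℓ_p}` for all scalars is big. -/
def SatisfiesUpperTreeEst (A : X →L[ℝ] Y) (p : ℝ≥0∞) (C : ℝ) : Prop :=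
  ∀ x : List (WNbhd X) → X, NormallyWeaklyNull x →
    Big {t : List (WNbhd X) | ∀ a : ℕ → ℝ, pBall p t.length a →
      ‖A (∑ i ∈ Finset.range t.length, a i • x (t.take (i + 1)))‖ ≤ C}

/-- `T_p(A)`: the infimum (in `ℝ≥0∞`, so `∞` if no such constant exists) of the
constants `C > 0` such that `A` satisfies `C`-`ℓ_p` upper tree estimates. -/
noncomputable def upperTreeConst (A : X →L[ℝ] Y) (p : ℝ≥0∞) : ℝ≥0∞ :=
  sInf (ENNReal.ofReal '' {C : ℝ | 0 < C ∧ SatisfiesUpperTreeEst A p C})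

section AuxCombinatorics

variable {D : Type*} [Preorder D]

lemma eventual_exists {S : Set D} (h : Eventual S) : ∃ u, u ∈ S := by
  unfold Eventual Cofinal at h
  push_neg at h
  obtain ⟨u, hu⟩ := h
  exact ⟨u, by by_contra hc; exact hu u hc le_rfl⟩

/-- The derivative operator whose least fixed point consists of the "unsafe"
positions for the branch game. -/
def Psi (B : Set (List D)) : Set (List D) →o Set (List D) where
  toFun S := {t | (t ≠ [] ∧ t ∉ B) ∨ Cofinal {u | t ++ [u] ∈ S}}
  monotone' S T hST t ht := by
    rcases ht with h | h
    · exact Or.inl h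
    · exact Or.inr fun u => by obtain ⟨v, hv, huv⟩ := h u; exact ⟨v, hST hv, huv⟩

lemma mem_lfp_of_not_big {B : Set (List D)} (h : ¬ Big B) : [] ∈ OrderHom.lfp (Psi B) := by
  by_contra hnil
  apply h
  refine ⟨(OrderHom.lfp (Psi B))ᶜ \ {[]}, ?_, ?_, ?_⟩
  · intro t ht
    have ht' : t ∉ Psi B (OrderHom.lfp (Psi B)) := by
      rw [OrderHom.map_lfp]; exact ht.1
    by_contra htB
    exact ht' (Or.inl ⟨ht.2, htB⟩)
  · have hnil' : [] ∉ Psi B (OrderHom.lfp (Psi B)) := by rw [OrderHom.map_lfp]; exact hnil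
    intro hcof
    refine hnil' (Or.inr fun u => ?_)
    obtain ⟨v, hv, huv⟩ := hcof u
    simp only [Set.mem_compl_iff, Set.mem_setOf_eq, Set.mem_diff, Set.mem_singleton_iff,
      not_and, not_not] at hv
    refine ⟨v, ?_, huv⟩
    show [] ++ [v] ∈ OrderHom.lfp (Psi B)
    rw [List.nil_append]
    by_contra hc
    exact absurd (hv hc) (by simp)
  · intro t ht htne
    have ht' : t ∉ Psi B (OrderHom.lfp (Psi B)) := by rw [OrderHom.map_lfp]; exact ht.1
    intro hcof
    refine ht' (Or.inr fun u => ?_)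
    obtain ⟨v, hv, huv⟩ := hcof u
    simp only [Set.mem_compl_iff, Set.mem_setOf_eq, Set.mem_diff, Set.mem_singleton_iff,
      not_and, not_not] at hv
    refine ⟨v, ?_, huv⟩
    by_contra hc
    exact absurd (hv hc) (by simp)

/-- A winning strategy for the "bad" player starting from the position `σ []`:
a shadow map on finite sequences that either freezes (once outside `B`) or extends by
one element dominating the opponent's move, and along every branch eventually leaves
`B`. -/
def Strat (B : Set (List D)) (σ : List D → List D) : Prop :=
  (∀ t u, (σ (t ++ [u]) = σ t ∧ σ t ∉ B) ∨ ∃ v, u ≤ v ∧ σ (t ++ [u]) = σ t ++ [v]) ∧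
  ∀ v : ℕ → D, ∃ n, σ (List.ofFn fun j : Fin n => v j) ∉ B

def Win (B : Set (List D)) : Set (List D) := {s | ∃ σ, σ [] = s ∧ Strat B σ}

lemma psi_win_subset (B : Set (List D)) : Psi B (Win B) ⊆ Win B := by
  rintro s (⟨hne, hnB⟩ | hcof)
  · exact ⟨fun _ => s, rfl, fun t u => Or.inl ⟨rfl, hnB⟩, fun v => ⟨0, by simpa using hnB⟩⟩
  · choose f hf hle using hcof
    choose σ hσ0 hσs using hf
    refine ⟨fun t => match t with | [] => s | u :: t' => σ u t', rfl, ?_, ?_⟩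
    · intro t u
      cases t with
      | nil => exact Or.inr ⟨f u, hle u, by simpa using hσ0 u⟩
      | cons u₀ t' =>
        rcases (hσs u₀).1 t' u with h | ⟨v, hv, heq⟩
        · exact Or.inl h
        · exact Or.inr ⟨v, hv, heq⟩
    · intro v
      obtain ⟨n, hn⟩ := (hσs (v 0)).2 (fun k => v (k + 1))
      refine ⟨n + 1, ?_⟩
      rw [List.ofFn_succ]
      simpa using hn

lemma win_of_not_big {B : Set (List D)} (h : ¬ Big B) : [] ∈ Win B :=
  (OrderHom.lfp_le (Psi B) (psi_win_subset B)) (mem_lfp_of_not_big h)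

omit [Preorder D] in
lemma seq_struct (g : ℕ → List D) (h0 : g 0 = []) :
    ∀ n, (∀ k < n, ∃ w, g (k + 1) = g k ++ [w]) →
      (g n).length = n ∧ ∀ j ≤ n, (g n).take j = g j := by
  intro n
  induction n with
  | zero => intro _; refine ⟨by simp [h0], fun j hj => by interval_cases j; simp [h0]⟩
  | succ n ih =>
    intro hg
    obtain ⟨hlen, htake⟩ := ih (fun k hk => hg k (Nat.lt_succ_of_lt hk))
    obtain ⟨w, hw⟩ := hg n (Nat.lt_succ_self n)
    constructor
    · rw [hw]; simp [hlen]
    · intro j hj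
      rcases lt_or_eq_of_le hj with hj' | rfl
      · rw [hw, List.take_append_of_le_length (by rw [hlen]; omega), htake j (by omega)]
      · exact List.take_of_length_le (by rw [hw]; simp [hlen])

omit [Preorder D] in
lemma ofFn_concat (v : ℕ → D) (k : ℕ) :
    (List.ofFn fun j : Fin (k + 1) => v j) = (List.ofFn fun j : Fin k => v j) ++ [v k] := by
  rw [List.ofFn_succ']
  simp [List.concat_eq_append]

end AuxCombinatorics

lemma wset_mono {u w : WNbhd X} (h : u ≤ w) : wset w ⊆ wset u := h

lemma zero_mem_wset (u : WNbhd X) : (0 : X) ∈ wset u := by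
  intro f hf
  simpa using u.2.2

/-- `A` fails `C`-`ℓ_p` (resp. `C`-`c₀`) upper tree estimates if and only if there is
a normally weakly null collection `(x_t) ⊆ B_X` such that along every infinite branch
`(v_i)` there are `n ∈ ℕ` and scalars `(a_i)_{i=1}^n` in the unit ball of `ℓ_p^n` with
`‖A ∑_{i=1}^n a_i x_{(v_1, …, v_i)}‖ > C`. -/


theorem not_upperTreeEst_iff [CompleteSpace X] [CompleteSpace Y]
    (A : X →L[ℝ] Y) (p : ℝ≥0∞) (hp : 1 < p) (C : ℝ) (hC : 0 < C) :
    ¬ SatisfiesUpperTreeEst A p C ↔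
      ∃ x : List (WNbhd X) → X, NormallyWeaklyNull x ∧
        ∀ v : ℕ → WNbhd X, ∃ n : ℕ, 0 < n ∧ ∃ a : ℕ → ℝ, pBall p n a ∧
          C < ‖A (∑ i ∈ Finset.range n,
            a i • x (List.ofFn fun j : Fin (i + 1) => v j))‖ := by
  classical
  set Bx : (List (WNbhd X) → X) → Set (List (WNbhd X)) := fun x =>
    {t : List (WNbhd X) | ∀ a : ℕ → ℝ, pBall p t.length a →
      ‖A (∑ i ∈ Finset.range t.length, a i • x (t.take (i + 1)))‖ ≤ C} with hBx
  constructor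
  · intro hns
    unfold SatisfiesUpperTreeEst at hns
    push_neg at hns
    obtain ⟨x, hx, hbig⟩ := hns
    obtain ⟨σ, hσ0, hstep, hwin⟩ := win_of_not_big (B := Bx x) hbig
    refine ⟨fun t => if σ t = σ t.dropLast then 0 else x (σ t), ?_, ?_⟩
    · intro t u
      have hd : (t ++ [u]).dropLast = t := by simp
      beta_reduce
      rcases hstep t u with ⟨heq, _⟩ | ⟨w, huw, heq⟩
      · rw [hd, if_pos heq]
        exact ⟨by simp, zero_mem_wset u⟩
      · have hne : σ (t ++ [u]) ≠ σ t := by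
          rw [heq]; intro h; simpa using congrArg List.length h
        rw [hd, if_neg hne, heq]
        obtain ⟨h1, h2⟩ := hx (σ t) w
        exact ⟨h1, wset_mono huw h2⟩
    · intro v
      set g : ℕ → List (WNbhd X) := fun k => σ (List.ofFn fun j : Fin k => v j) with hg
      have hg0 : g 0 = [] := by simpa [hg] using hσ0
      have hstep' : ∀ k,
          (g (k + 1) = g k ∧ g k ∉ Bx x) ∨ ∃ w, v k ≤ w ∧ g (k + 1) = g k ++ [w] := by
        intro k
        have := hstep (List.ofFn fun j : Fin k => v j) (v k)
        rw [← ofFn_concat] at this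
        exact this
      have hex : ∃ n, g n ∉ Bx x := hwin v
      set N := Nat.find hex with hN
      have hNspec : g N ∉ Bx x := Nat.find_spec hex
      have hmin : ∀ k < N, g k ∈ Bx x := fun k hk => not_not.mp (Nat.find_min hex hk)
      have happend : ∀ k < N, ∃ w, g (k + 1) = g k ++ [w] := by
        intro k hk
        rcases hstep' k with ⟨_, hb⟩ | ⟨w, _, hw⟩
        · exact absurd (hmin k hk) hb
        · exact ⟨w, hw⟩
      obtain ⟨hlen, htake⟩ := seq_struct g hg0 N happend
      have hN0 : 0 < N := by
        rcases Nat.eq_zero_or_pos N with h | h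
        · exfalso
          apply hNspec
          rw [h, hg0]
          intro a _
          simp [hC.le]
        · exact h
      simp only [hBx, Set.mem_setOf_eq, not_forall] at hNspec
      obtain ⟨a, ha, hgt⟩ := hNspec
      rw [hlen] at ha
      refine ⟨N, hN0, a, ha, ?_⟩
      have hsum : ∀ i ∈ Finset.range N,
          a i • (if σ (List.ofFn fun j : Fin (i + 1) => v j) =
              σ (List.ofFn fun j : Fin (i + 1) => v j).dropLast then (0 : X)
            else x (σ (List.ofFn fun j : Fin (i + 1) => v j)))
          = a i • x ((g N).take (i + 1)) := by
        intro i hi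
        rw [Finset.mem_range] at hi
        obtain ⟨w, hw⟩ := happend i hi
        have hdl : (List.ofFn fun j : Fin (i + 1) => v j).dropLast
            = List.ofFn fun j : Fin i => v j := by
          rw [ofFn_concat]; simp
        have hne : σ (List.ofFn fun j : Fin (i + 1) => v j)
            ≠ σ (List.ofFn fun j : Fin i => v j) := by
          show g (i + 1) ≠ g i
          rw [hw]; intro h; simpa using congrArg List.length h
        rw [hdl, if_neg hne, htake (i + 1) hi]
      rw [Finset.sum_congr rfl hsum]
      rw [hlen] at hgt
      push_neg at hgt
      exact hgt
  · rintro ⟨x, hx, hb⟩ hsat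
    obtain ⟨B', hsub, hfirst, hstepB⟩ := hsat x hx
    obtain ⟨u₀, hu₀⟩ := eventual_exists hfirst
    set L : ℕ → List (WNbhd X) := fun n => Nat.rec []
      (fun _ l => l ++ [if h : ∃ u, l ++ [u] ∈ B' then h.choose else u₀]) n with hLdef
    set v : ℕ → WNbhd X := fun n =>
      if h : ∃ u, L n ++ [u] ∈ B' then h.choose else u₀ with hvdef
    have hL0 : L 0 = [] := rfl
    have hLs : ∀ n, L (n + 1) = L n ++ [v n] := fun n => rfl
    have happend : ∀ n, ∀ k < n, ∃ w, L (k + 1) = L k ++ [w] := fun n k _ => ⟨v k, hLs k⟩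
    have hlen : ∀ n, (L n).length = n := fun n => (seq_struct L hL0 n (happend n)).1
    have htake : ∀ n, ∀ j ≤ n, (L n).take j = L j :=
      fun n => (seq_struct L hL0 n (happend n)).2
    have hmem : ∀ n, L (n + 1) ∈ B' := by
      intro n
      induction n with
      | zero =>
        have hex : ∃ u, L 0 ++ [u] ∈ B' := ⟨u₀, by simpa [hL0] using hu₀⟩
        have hv : v 0 = hex.choose := dif_pos hex
        rw [hLs 0, hv]
        exact hex.choose_spec
      | succ n ih =>
        have hne : L (n + 1) ≠ [] := by
          intro h
          have := hlen (n + 1)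
          rw [h] at this
          simp at this
        have hev := hstepB (L (n + 1)) ih hne
        obtain ⟨u, hu⟩ := eventual_exists hev
        have hex : ∃ u, L (n + 1) ++ [u] ∈ B' := ⟨u, hu⟩
        have hv : v (n + 1) = hex.choose := dif_pos hex
        rw [hLs (n + 1), hv]
        exact hex.choose_spec
    have hofL : ∀ n, (List.ofFn fun j : Fin n => v j) = L n := by
      intro n
      induction n with
      | zero => simp [hL0]
      | succ n ih => rw [ofFn_concat, ih, hLs]
    obtain ⟨n, hn0, a, ha, hgt⟩ := hb v
    obtain ⟨m, rfl⟩ := Nat.exists_eq_add_of_lt hn0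
    have hLB : L (0 + m + 1) ∈ Bx x := hsub (hmem _)
    simp only [hBx, Set.mem_setOf_eq] at hLB
    have := hLB a (by rw [hlen (0 + m + 1)]; exact ha)
    rw [hlen (0 + m + 1)] at this
    refine absurd ?_ (not_le.mpr hgt)
    calc ‖A (∑ i ∈ Finset.range (0 + m + 1),
        a i • x (List.ofFn fun j : Fin (i + 1) => v j))‖
        = ‖A (∑ i ∈ Finset.range (0 + m + 1), a i • x ((L (0 + m + 1)).take (i + 1)))‖ := by
          congr 1
          apply congrArg
          refine Finset.sum_congr rfl fun i hi => ?_
          rw [Finset.mem_range] at hi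
          rw [hofL (i + 1), htake (0 + m + 1) (i + 1) (by omega)]
      _ ≤ C := this
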